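/- Let M be an n×n real symmetric positive definite matrix whose off-diagonal entries are all nonpositive (a symmetric nonsingular M-matrix). Let P be an n×n nonnegative diagonal matrix, let w ≥ 0, let u be an index, and let E_{uu} be the matrix with a 1 in position (u,u) and zeros elsewhere. Then Tr((M + P)^{-1}) − Tr((M + P + w E_{uu})^{-1}) ≤ Tr(M^{-1}) − Tr((M + w E_{uu})^{-1}). -/

import Mathlib

open Matrix

section Aux

variable {n : ℕ}

/-- If `M` is a positive definite Z-matrix and `M *ᵥ x` is entrywise nonnegative,
then `x` is entrywise nonnegative. -/
lemma zmat_mulVec_nonneg (M : Matrix (Fin n) (Fin n) ℝ) (hM : M.PosDef)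
    (hoff : ∀ i j : Fin n, i ≠ j → M i j ≤ 0)
    (x : Fin n → ℝ) (hb : ∀ i, 0 ≤ (M *ᵥ x) i) : ∀ i, 0 ≤ x i := by
  set y : Fin n → ℝ := fun i => max (-x i) 0 with hy
  have hy0 : ∀ i, 0 ≤ y i := fun i => le_max_right _ _
  have hxy0 : ∀ i, 0 ≤ x i + y i := by
    intro i
    rcases le_total 0 (x i) with h | h
    · have : 0 ≤ y i := hy0 i
      linarith
    · have : y i = -x i := max_eq_left (by linarith)
      simp [this]
  have hprod : ∀ i, y i * (x i + y i) = 0 := by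
    intro i
    rcases le_total 0 (x i) with h | h
    · have : y i = 0 := max_eq_right (by linarith)
      simp [this]
    · have : y i = -x i := max_eq_left (by linarith)
      rw [this]; ring
  have h1 : 0 ≤ y ⬝ᵥ (M *ᵥ x) := by
    apply Finset.sum_nonneg
    intro i _
    exact mul_nonneg (hy0 i) (hb i)
  have h2 : y ⬝ᵥ (M *ᵥ (x + y)) ≤ 0 := by
    apply Finset.sum_nonpos
    intro i _
    show y i * (M *ᵥ (x + y)) i ≤ 0
    rw [mulVec, dotProduct, Finset.mul_sum]
    apply Finset.sum_nonpos
    intro j _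
    simp only [Pi.add_apply]
    rcases eq_or_ne i j with rfl | hij
    · have h := hprod i
      have h' : y i * (M i i * (x i + y i)) = M i i * (y i * (x i + y i)) := by ring
      rw [h', h, mul_zero]
    · have hMij := hoff i j hij
      have h3 := hxy0 j
      have h4 := hy0 i
      have h5 : 0 ≤ y i * (x j + y j) := mul_nonneg h4 h3
      nlinarith
  have h3 : y ⬝ᵥ (M *ᵥ y) ≤ 0 := by
    have heq : y ⬝ᵥ (M *ᵥ (x + y)) = y ⬝ᵥ (M *ᵥ x) + y ⬝ᵥ (M *ᵥ y) := by
      rw [mulVec_add, dotProduct_add]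
    linarith
  have hy_eq : y = 0 := by
    by_contra hne
    have := hM.dotProduct_mulVec_pos hne
    rw [star_trivial] at this
    linarith
  intro i
  rcases le_total 0 (x i) with h | h
  · exact h
  · have h5 : y i = -x i := max_eq_left (by linarith)
    rw [hy_eq] at h5
    have : (0 : ℝ) = -x i := h5
    linarith

/-- The inverse of a positive definite Z-matrix is entrywise nonnegative. -/
lemma zmat_inv_nonneg (M : Matrix (Fin n) (Fin n) ℝ) (hM : M.PosDef)
    (hoff : ∀ i j : Fin n, i ≠ j → M i j ≤ 0) : ∀ i j, 0 ≤ M⁻¹ i j := by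
  intro i j
  have hinv : M * M⁻¹ = 1 := mul_nonsing_inv M hM.det_pos.ne'.isUnit
  refine zmat_mulVec_nonneg M hM hoff (fun k => M⁻¹ k j) (fun k => ?_) i
  have : (M *ᵥ fun k => M⁻¹ k j) k = (M * M⁻¹) k j := by
    simp [mulVec, dotProduct, Matrix.mul_apply]
  rw [this, hinv]
  by_cases h : k = j <;> simp [Matrix.one_apply, h]

/-- Adding a nonnegative diagonal preserves positive definiteness. -/
lemma posdef_add_diag (M : Matrix (Fin n) (Fin n) ℝ) (hM : M.PosDef)
    (d : Fin n → ℝ) (hd : ∀ i, 0 ≤ d i) : (M + diagonal d).PosDef :=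
  hM.add_posSemidef (posSemidef_diagonal_iff.mpr fun i => hd i)

lemma zmat_add_diag_off (M : Matrix (Fin n) (Fin n) ℝ)
    (hoff : ∀ i j : Fin n, i ≠ j → M i j ≤ 0) (d : Fin n → ℝ) :
    ∀ i j : Fin n, i ≠ j → (M + diagonal d) i j ≤ 0 := by
  intro i j hij
  have : (M + diagonal d) i j = M i j := by
    simp [Matrix.add_apply, diagonal_apply_ne _ hij]
  rw [this]; exact hoff i j hij

/-- Entrywise monotonicity of the inverse under nonnegative diagonal perturbations. -/
lemma zmat_inv_mono (M : Matrix (Fin n) (Fin n) ℝ) (hM : M.PosDef)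
    (hoff : ∀ i j : Fin n, i ≠ j → M i j ≤ 0)
    (d : Fin n → ℝ) (hd : ∀ i, 0 ≤ d i) :
    ∀ i j, (M + diagonal d)⁻¹ i j ≤ M⁻¹ i j := by
  intro i j
  have hMd : (M + diagonal d).PosDef := posdef_add_diag M hM d hd
  have hMu : IsUnit M.det := hM.det_pos.ne'.isUnit
  have hMdu : IsUnit (M + diagonal d).det := hMd.det_pos.ne'.isUnit
  have key : M⁻¹ - (M + diagonal d)⁻¹ = M⁻¹ * diagonal d * (M + diagonal d)⁻¹ := by
    have h1 : M⁻¹ * (M + diagonal d) * (M + diagonal d)⁻¹ = M⁻¹ := by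
      rw [Matrix.mul_assoc, mul_nonsing_inv _ hMdu, Matrix.mul_one]
    have h2 : M⁻¹ * M * (M + diagonal d)⁻¹ = (M + diagonal d)⁻¹ := by
      rw [nonsing_inv_mul _ hMu, Matrix.one_mul]
    calc M⁻¹ - (M + diagonal d)⁻¹
        = M⁻¹ * (M + diagonal d) * (M + diagonal d)⁻¹
          - M⁻¹ * M * (M + diagonal d)⁻¹ := by rw [h1, h2]
      _ = M⁻¹ * diagonal d * (M + diagonal d)⁻¹ := by
          rw [Matrix.mul_add, Matrix.add_mul, add_sub_cancel_left]
  have hN : ∀ a b, 0 ≤ M⁻¹ a b := zmat_inv_nonneg M hM hoff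
  have hN' : ∀ a b, 0 ≤ (M + diagonal d)⁻¹ a b :=
    zmat_inv_nonneg _ hMd (zmat_add_diag_off M hoff d)
  have : 0 ≤ (M⁻¹ * diagonal d * (M + diagonal d)⁻¹) i j := by
    rw [Matrix.mul_apply]
    apply Finset.sum_nonneg
    intro k _
    apply mul_nonneg _ (hN' k j)
    rw [Matrix.mul_diagonal]
    exact mul_nonneg (hN i k) (hd k)
  have hsub : 0 ≤ (M⁻¹ - (M + diagonal d)⁻¹) i j := by rw [key]; exact this
  have : (M⁻¹ - (M + diagonal d)⁻¹) i j = M⁻¹ i j - (M + diagonal d)⁻¹ i j := rfl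
  linarith [hsub, this ▸ hsub]

/-- Trace difference formula. -/
lemma trace_inv_sub (M : Matrix (Fin n) (Fin n) ℝ) (hM : M.PosDef)
    (d : Fin n → ℝ) (hd : ∀ i, 0 ≤ d i) :
    (M⁻¹).trace - ((M + diagonal d)⁻¹).trace =
      ∑ i, ∑ j, M⁻¹ i j * d j * (M + diagonal d)⁻¹ j i := by
  have hMd : (M + diagonal d).PosDef := posdef_add_diag M hM d hd
  have hMu : IsUnit M.det := hM.det_pos.ne'.isUnit
  have hMdu : IsUnit (M + diagonal d).det := hMd.det_pos.ne'.isUnit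
  have key : M⁻¹ - (M + diagonal d)⁻¹ = M⁻¹ * diagonal d * (M + diagonal d)⁻¹ := by
    have h1 : M⁻¹ * (M + diagonal d) * (M + diagonal d)⁻¹ = M⁻¹ := by
      rw [Matrix.mul_assoc, mul_nonsing_inv _ hMdu, Matrix.mul_one]
    have h2 : M⁻¹ * M * (M + diagonal d)⁻¹ = (M + diagonal d)⁻¹ := by
      rw [nonsing_inv_mul _ hMu, Matrix.one_mul]
    calc M⁻¹ - (M + diagonal d)⁻¹
        = M⁻¹ * (M + diagonal d) * (M + diagonal d)⁻¹
          - M⁻¹ * M * (M + diagonal d)⁻¹ := by rw [h1, h2]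
      _ = M⁻¹ * diagonal d * (M + diagonal d)⁻¹ := by
          rw [Matrix.mul_add, Matrix.add_mul, add_sub_cancel_left]
  have : (M⁻¹).trace - ((M + diagonal d)⁻¹).trace
      = (M⁻¹ * diagonal d * (M + diagonal d)⁻¹).trace := by
    rw [← key, trace_sub]
  rw [this, Matrix.trace]
  congr 1
  ext i
  rw [diag_apply, Matrix.mul_apply]
  congr 1
  ext j
  rw [Matrix.mul_diagonal]

end Aux

/-- Let `M` be an `n×n` real symmetric positive definite matrix with
nonpositive off-diagonal entries, `P` a nonnegative diagonal matrix, `w ≥ 0`, and `u` an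
index. Then `Tr((M + P)⁻¹) − Tr((M + P + w E_{uu})⁻¹) ≤ Tr(M⁻¹) − Tr((M + w E_{uu})⁻¹)`. -/
theorem trace_inv_diff_supermodular {n : ℕ}
    (M : Matrix (Fin n) (Fin n) ℝ) (hM : M.PosDef)
    (hoff : ∀ i j : Fin n, i ≠ j → M i j ≤ 0)
    (p : Fin n → ℝ) (hp : ∀ i, 0 ≤ p i)
    (w : ℝ) (hw : 0 ≤ w) (u : Fin n) :
    ((M + diagonal p)⁻¹).trace - ((M + diagonal p + Matrix.single u u w)⁻¹).trace ≤
      (M⁻¹).trace - ((M + Matrix.single u u w)⁻¹).trace := by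
  set q : Fin n → ℝ := fun i => if i = u then w else 0 with hq
  have hq0 : ∀ i, 0 ≤ q i := by
    intro i; by_cases h : i = u <;> simp [hq, h, hw]
  have hE : Matrix.single u u w = diagonal q := by
    ext i j
    rw [Matrix.single, of_apply, diagonal_apply]
    by_cases h1 : i = j
    · subst h1
      by_cases h2 : i = u <;> simp [hq, h2, eq_comm]
    · have : ¬(u = i ∧ u = j) := by
        rintro ⟨rfl, rfl⟩; exact h1 rfl
      simp [h1, this]
  rw [hE]
  -- A := M + diagonal p
  have hA : (M + diagonal p).PosDef := posdef_add_diag M hM p hp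
  have hAoff := zmat_add_diag_off M hoff p
  have hBq : (M + diagonal q).PosDef := posdef_add_diag M hM q hq0
  have hBqoff := zmat_add_diag_off M hoff q
  rw [trace_inv_sub _ hA q hq0, trace_inv_sub _ hM q hq0]
  apply Finset.sum_le_sum
  intro i _
  apply Finset.sum_le_sum
  intro j _
  -- bounds
  have hN1 : (M + diagonal p)⁻¹ i j ≤ M⁻¹ i j := zmat_inv_mono M hM hoff p hp i j
  have hN1' : 0 ≤ (M + diagonal p)⁻¹ i j := zmat_inv_nonneg _ hA hAoff i j
  have hcomm : M + diagonal p + diagonal q = M + diagonal q + diagonal p := add_right_comm M (diagonal p) (diagonal q)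
  have hN2 : (M + diagonal p + diagonal q)⁻¹ j i ≤ (M + diagonal q)⁻¹ j i := by
    rw [hcomm]
    exact zmat_inv_mono _ hBq hBqoff p hp j i
  have hN2' : 0 ≤ (M + diagonal p + diagonal q)⁻¹ j i := by
    rw [hcomm]
    exact zmat_inv_nonneg _ (posdef_add_diag _ hBq p hp)
      (zmat_add_diag_off _ hBqoff p) j i
  have hqj := hq0 j
  have hM1 : 0 ≤ M⁻¹ i j := le_trans hN1' hN1
  exact mul_le_mul (mul_le_mul_of_nonneg_right hN1 hqj) hN2 hN2' (mul_nonneg hM1 hqj)
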